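/- Let d ∈ ℕ with d ≥ 2, κ ∈ ℝ \ {0}, and Λ ∈ ℝ. Let a_1, …, a_d : ℝ → ℝ be twice differentiable with a_l(t) > 0 for all t, let φ be differentiable, and let ρ, p : ℝ → ℝ and V : ℝ → ℝ satisfy the conformal Bianchi I Einstein equations (I_0), (I_1), …, (I_d) for all t ∈ ℝ. Let ν ∈ ℝ \ {0}, set R = (a_1⋯a_d)^ν, let θ > 0 and q ∈ ℝ \ {0}, and let τ satisfy τ'(t) = θ R(t)^{q+1/ν} for all t with differentiable inverse f (f(τ(t)) = t). Then there exist constants μ_2, …, μ_d ∈ ℝ and ω_2, …, ω_d > 0 such that a_i(t) = ω_i e^{μ_i t} a_1(t) for all t and all 2 ≤ i ≤ d; and for any such constants, setting L = (2/(d−1)) Σ_{2≤l<k≤d} μ_l μ_k − Σ_{j=2}^d μ_j², Y(s) = R(f(s))^q, φ̃ = φ∘f, Q(s) = (qνdκ/(d−1)) φ̃'(s)², ρ̃ = ρ∘f, and p̃ = p∘f, for every t ∈ ℝ, at s = τ(t) the function Y is twice differentiable and satisfies Y''(s) + Q(s)Y(s) = qνL/(θ² Y(s)^{(qν+2)/(qν)})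 − qνdκ(ρ̃(s) + p̃(s))/(θ²(d−1) Y(s)). -/

import Mathlib

open Finset in
lemma sq_sum_pairs (d : ℕ) (x : Fin d → ℝ) :
    (∑ l, x l)^2 = (∑ l, (x l)^2)
      + 2 * ∑ pr ∈ Finset.univ.filter (fun pr : Fin d × Fin d => pr.1 < pr.2),
          x pr.1 * x pr.2 := by
  classical
  have h1 : (∑ l, x l)^2
      = ∑ pr ∈ (Finset.univ ×ˢ Finset.univ : Finset (Fin d × Fin d)), x pr.1 * x pr.2 := by
    rw [sq, Finset.sum_mul_sum, Finset.sum_product]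
  have h2 := Finset.sum_filter_add_sum_filter_not
    (Finset.univ ×ˢ Finset.univ : Finset (Fin d × Fin d))
    (fun pr => pr.1 < pr.2) (fun pr => x pr.1 * x pr.2)
  have h3 := Finset.sum_filter_add_sum_filter_not
    ((Finset.univ ×ˢ Finset.univ : Finset (Fin d × Fin d)).filter (fun pr => ¬ pr.1 < pr.2))
    (fun pr => pr.2 < pr.1) (fun pr => x pr.1 * x pr.2)
  have hgt : ∑ pr ∈ ((Finset.univ ×ˢ Finset.univ : Finset (Fin d × Fin d)).filter
        (fun pr => ¬ pr.1 < pr.2)).filter (fun pr => pr.2 < pr.1), x pr.1 * x pr.2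
      = ∑ pr ∈ (Finset.univ ×ˢ Finset.univ : Finset (Fin d × Fin d)).filter
        (fun pr => pr.1 < pr.2), x pr.1 * x pr.2 := by
    apply Finset.sum_nbij' (i := Prod.swap) (j := Prod.swap) <;>
      simp [mul_comm, and_comm] <;> exact fun a b h => ⟨h.le, h⟩
  have hdiag : ∑ pr ∈ ((Finset.univ ×ˢ Finset.univ : Finset (Fin d × Fin d)).filter
        (fun pr => ¬ pr.1 < pr.2)).filter (fun pr => ¬ pr.2 < pr.1), x pr.1 * x pr.2
      = ∑ l, (x l)^2 := by
    apply Finset.sum_nbij' (i := fun pr => pr.1) (j := fun l => (l, l)) <;>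
      simp +contextual [not_lt, sq, Prod.ext_iff] <;>
      exact fun a b h1 h2 => by have h : a = b := le_antisymm h2 h1; subst h; simp
  simp only [Finset.univ_product_univ] at h1 h2 h3 hgt hdiag
  linarith [h1, h2, h3, hgt, hdiag]

set_option maxHeartbeats 2000000 in
/-- conformal Bianchi I Einstein equations imply a generalized EMP equation. -/
theorem stmt_15
    (d : ℕ) (hd : 2 ≤ d) (κ Λ : ℝ) (hκ : κ ≠ 0)
    (a : Fin d → ℝ → ℝ) (φ ρ p V : ℝ → ℝ)
    (ha : ∀ l, Differentiable ℝ (a l)) (ha' : ∀ l, Differentiable ℝ (deriv (a l)))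
    (hapos : ∀ l t, 0 < a l t)
    (hφ : Differentiable ℝ φ)
    (H : Fin d → ℝ → ℝ) (hH : ∀ l t, H l t = deriv (a l) t / a l t)
    (hI0 : ∀ t, (∑ pr ∈ Finset.univ.filter (fun pr : Fin d × Fin d => pr.1 < pr.2),
          H pr.1 t * H pr.2 t)
        = κ * ((deriv φ t) ^ 2 / 2 + (∏ l, a l t) ^ 2 * (V (φ t) + ρ t + Λ / κ)))
    (hIi : ∀ i : Fin d, ∀ t,
        (∑ l ∈ Finset.univ.filter (fun l => l ≠ i), deriv (H l) t)
          - (∑ pr ∈ Finset.univ.filter (fun pr : Fin d × Fin d => pr.1 < pr.2),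
              H pr.1 t * H pr.2 t)
        = κ * (-(deriv φ t) ^ 2 / 2 + (∏ l, a l t) ^ 2 * (V (φ t) - p t + Λ / κ)))
    (ν : ℝ) (hν : ν ≠ 0)
    (R : ℝ → ℝ) (hR : ∀ t, R t = (∏ l, a l t) ^ ν)
    (θ q : ℝ) (hθ : 0 < θ) (hq : q ≠ 0)
    (τ f : ℝ → ℝ)
    (hτ : ∀ t, deriv τ t = θ * R t ^ (q + 1 / ν))
    (hf : Differentiable ℝ f) (hfτ : ∀ t, f (τ t) = t)
    (Y φt Q : ℝ → ℝ)
    (hY : ∀ s, Y s = R (f s) ^ q)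
    (hφt : ∀ s, φt s = φ (f s))
    (hQ : ∀ s, Q s = (q * ν * (d : ℝ) * κ / ((d : ℝ) - 1)) * (deriv φt s) ^ 2) :
    (∃ μ ω : Fin d → ℝ, (∀ i : Fin d, i.val ≠ 0 → 0 < ω i) ∧
      ∀ i : Fin d, i.val ≠ 0 → ∀ t,
        a i t = ω i * Real.exp (μ i * t) * a ⟨0, by omega⟩ t) ∧
    ∀ μ ω : Fin d → ℝ, (∀ i : Fin d, i.val ≠ 0 → 0 < ω i) →
      (∀ i : Fin d, i.val ≠ 0 → ∀ t,
        a i t = ω i * Real.exp (μ i * t) * a ⟨0, by omega⟩ t) →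
      ∀ t, DifferentiableAt ℝ Y (τ t) ∧ DifferentiableAt ℝ (deriv Y) (τ t) ∧
        deriv (deriv Y) (τ t) + Q (τ t) * Y (τ t)
          = q * ν * ((2 / ((d : ℝ) - 1)) *
                (∑ pr ∈ Finset.univ.filter
                    (fun pr : Fin d × Fin d => pr.1.val ≠ 0 ∧ pr.1 < pr.2),
                  μ pr.1 * μ pr.2)
              - (∑ j ∈ Finset.univ.filter (fun j : Fin d => j.val ≠ 0), μ j ^ 2))
              / (θ ^ 2 * Y (τ t) ^ ((q * ν + 2) / (q * ν)))
            - q * ν * (d : ℝ) * κ * (ρ (f (τ t)) + p (f (τ t)))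
              / (θ ^ 2 * ((d : ℝ) - 1) * Y (τ t)) := by
  classical
  have hz' : 0 < d := by omega
  set z : Fin d := ⟨0, hz'⟩ with hzdef
  have hHfun : ∀ l, H l = fun t => deriv (a l) t / a l t := fun l => funext (hH l)
  have hHdiff : ∀ l, Differentiable ℝ (H l) := by
    intro l; rw [hHfun l]; exact (ha' l).div (ha l) (fun t => (hapos l t).ne')
  have hkey : ∀ (j : Fin d) (t : ℝ),
      (∑ l ∈ Finset.univ.filter (fun l => l ≠ j), deriv (H l) t)
        = (∑ l, deriv (H l) t) - deriv (H j) t := by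
    intro j t
    rw [Finset.filter_ne', Finset.sum_erase_eq_sub (Finset.mem_univ j)]
  -- Part 1
  have part1 : (∃ μ ω : Fin d → ℝ, (∀ i : Fin d, i.val ≠ 0 → 0 < ω i) ∧
      ∀ i : Fin d, i.val ≠ 0 → ∀ t,
        a i t = ω i * Real.exp (μ i * t) * a z t) := by
    have hderiv_eq : ∀ (i : Fin d) (t : ℝ), deriv (H i) t = deriv (H z) t := by
      intro i t
      have e1 := hIi i t
      have e2 := hIi z t
      rw [hkey i] at e1
      rw [hkey z] at e2
      linarith
    have hHconst : ∀ i t, H i t - H z t = H i 0 - H z 0 := by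
      intro i t
      have hdiff : Differentiable ℝ (fun u => H i u - H z u) := (hHdiff i).sub (hHdiff z)
      have hzero : ∀ u, deriv (fun u => H i u - H z u) u = 0 := by
        intro u
        rw [deriv_fun_sub ((hHdiff i) u) ((hHdiff z) u), hderiv_eq i u, hderiv_eq z u, sub_self]
      exact is_const_of_deriv_eq_zero hdiff hzero t 0
    have hlog : ∀ l u, HasDerivAt (fun u => Real.log (a l u)) (H l u) u := by
      intro l u; rw [hH]; exact (((ha l) u).hasDerivAt.log (hapos l u).ne')
    refine ⟨fun i => H i 0 - H z 0, fun i => a i 0 / a z 0,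
      fun i _ => div_pos (hapos i 0) (hapos z 0), fun i _ t => ?_⟩
    set c := H i 0 - H z 0 with hc
    set F : ℝ → ℝ := fun u => Real.log (a i u) - Real.log (a z u) - c * u with hF
    have hF0 : ∀ u, HasDerivAt F 0 u := by
      intro u
      have h1 : HasDerivAt F (H i u - H z u - c * 1) u :=
        ((hlog i u).sub (hlog z u)).sub ((hasDerivAt_id u).const_mul c)
      rwa [mul_one, hHconst i u, ← hc, sub_self] at h1
    have hFc : F t = F 0 :=
      is_const_of_deriv_eq_zero (fun u => (hF0 u).differentiableAt)
        (fun u => (hF0 u).deriv) t 0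
    simp only [hF, mul_zero, sub_zero] at hFc
    have hlogeq : Real.log (a i t)
        = Real.log (a i 0) - Real.log (a z 0) + c * t + Real.log (a z t) := by linarith
    have hthis := congrArg Real.exp hlogeq
    rw [Real.exp_log (hapos i t), Real.exp_add, Real.exp_add, Real.exp_sub,
      Real.exp_log (hapos i 0), Real.exp_log (hapos z 0), Real.exp_log (hapos z t)] at hthis
    rw [hthis]
  refine ⟨part1, ?_⟩
  -- Part 2 setup
  intro μ ω hω hrel t
  set A : ℝ → ℝ := fun u => ∏ l, a l u with hAdef
  have hApos : ∀ u, 0 < A u := fun u => Finset.prod_pos (fun l _ => hapos l u)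
  set h : ℝ → ℝ := fun u => ∑ l, H l u with hhdef
  have hAder : ∀ u, HasDerivAt A (A u * h u) u := by
    intro u
    have h1 : HasDerivAt (fun x => ∏ l, a l x)
        (∑ i, (∏ j ∈ Finset.univ.erase i, a j u) • deriv (a i) u) u :=
      HasDerivAt.fun_finsetProd (fun i _ => ((ha i) u).hasDerivAt)
    have h2 : (∑ i, (∏ j ∈ Finset.univ.erase i, a j u) • deriv (a i) u) = A u * h u := by
      rw [hhdef, Finset.mul_sum]
      refine Finset.sum_congr rfl (fun i _ => ?_)
      have hAe : A u = a i u * ∏ j ∈ Finset.univ.erase i, a j u :=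
        (Finset.mul_prod_erase Finset.univ (fun l => a l u) (Finset.mem_univ i)).symm
      have hne := (hapos i u).ne'
      rw [smul_eq_mul, hH i u, hAe]
      field_simp
    rwa [h2] at h1
  have hAdiff : Differentiable ℝ A := fun u => (hAder u).differentiableAt
  have hhdiff : Differentiable ℝ h := by
    rw [hhdef]; exact Differentiable.fun_sum (fun i _ => hHdiff i)
  have hhder : ∀ u, deriv h u = ∑ l, deriv (H l) u := by
    intro u; rw [hhdef]; exact deriv_fun_sum (fun i _ => (hHdiff i) u)
  set m : ℝ := q * ν with hmdef
  have hm : m ≠ 0 := mul_ne_zero hq hν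
  have hRa : ∀ u, R u = A u ^ ν := hR
  have hRA : ∀ u, R u ^ (q + 1 / ν) = A u ^ (m + 1) := by
    intro u
    rw [hRa u, ← Real.rpow_mul (hApos u).le]
    congr 1
    field_simp
    rw [hmdef]; ring
  have hτder : ∀ u, HasDerivAt τ (θ * A u ^ (m + 1)) u := by
    intro u
    have hpos : 0 < deriv τ u := by
      rw [hτ u]
      exact mul_pos hθ (Real.rpow_pos_of_pos
        (by rw [hRa u]; exact Real.rpow_pos_of_pos (hApos u) ν) _)
    have hdt : DifferentiableAt ℝ τ u := by
      by_contra hcon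
      rw [deriv_zero_of_not_differentiableAt hcon] at hpos
      exact lt_irrefl 0 hpos
    have := hdt.hasDerivAt
    rwa [hτ u, hRA u] at this
  have hYdef : Y = fun s => A (f s) ^ m := by
    funext s
    rw [hY s, hRa (f s), ← Real.rpow_mul (hApos (f s)).le, mul_comm ν q, ← hmdef]
  have hYdiff : Differentiable ℝ Y := by
    rw [hYdef]
    exact fun s => (DifferentiableAt.rpow_const ((hAdiff (f s)).comp s (hf s))
      (Or.inl (hApos (f s)).ne'))
  set g : ℝ → ℝ := fun u => (m / θ) * h u / A u with hgdef
  have hgdiff : Differentiable ℝ g :=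
    ((hhdiff.const_mul (m / θ)).div hAdiff (fun u => (hApos u).ne'))
  have hBpos : ∀ u, 0 < A u ^ m := fun u => Real.rpow_pos_of_pos (hApos u) m
  have hAm1 : ∀ u, A u ^ (m + 1) = A u ^ m * A u := fun u =>
    Real.rpow_add_one (hApos u).ne' m
  have hYτ : ∀ u, deriv Y (τ u) = g u := by
    intro u
    have hcomp : HasDerivAt (fun v => Y (τ v)) (deriv Y (τ u) * (θ * A u ^ (m + 1))) u :=
      (hYdiff (τ u)).hasDerivAt.comp u (hτder u)
    have heq : (fun v => Y (τ v)) = fun v => A v ^ m := by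
      funext v; rw [hYdef]; simp only [hfτ v]
    rw [heq] at hcomp
    have hA2 := (hAder u).rpow_const (p := m) (Or.inl (hApos u).ne')
    have huniq := hcomp.unique hA2
    have hAm : A u ^ (m - 1) * A u = A u ^ m := by
      rw [← Real.rpow_add_one (hApos u).ne' (m - 1)]; ring_nf
    have hBne := (hBpos u).ne'
    have hAne := (hApos u).ne'
    have hθne := hθ.ne'
    rw [hAm1 u] at huniq
    have hr : A u * h u * m * A u ^ (m - 1) = m * h u * A u ^ m := by
      rw [← hAm]; ring
    rw [hr] at huniq
    have hX : deriv Y (τ u) = m * h u * A u ^ m / (θ * (A u ^ m * A u)) :=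
      eq_div_of_mul_eq (by positivity) huniq
    show deriv Y (τ u) = m / θ * h u / A u
    rw [hX]
    field_simp
  -- neighborhood argument
  have hτmono : StrictMono τ := strictMono_of_deriv_pos (fun u => by
    rw [hτ u]
    exact mul_pos hθ (Real.rpow_pos_of_pos
      (by rw [hRa u]; exact Real.rpow_pos_of_pos (hApos u) ν) _))
  have hτcont : Continuous τ :=
    (Differentiable.continuous (fun u => (hτder u).differentiableAt))
  have hsub : Set.Ioo (τ (t - 1)) (τ (t + 1)) ⊆ τ '' Set.Ioo (t - 1) (t + 1) :=
    intermediate_value_Ioo (by linarith) hτcont.continuousOn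
  have hnhds : Set.Ioo (τ (t - 1)) (τ (t + 1)) ∈ nhds (τ t) :=
    Ioo_mem_nhds (hτmono (by linarith)) (hτmono (by linarith))
  have hev : deriv Y =ᶠ[nhds (τ t)] fun s => g (f s) := by
    filter_upwards [hnhds] with s hs
    obtain ⟨u, _, rfl⟩ := hsub hs
    rw [hYτ u, hfτ u]
  have hgf : DifferentiableAt ℝ (fun s => g (f s)) (τ t) :=
    DifferentiableAt.comp (τ t) (hgdiff (f (τ t))) (hf (τ t))
  have hdY2 : DifferentiableAt ℝ (deriv Y) (τ t) :=
    hgf.congr_of_eventuallyEq hev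
  have hder2 : deriv (deriv Y) (τ t) = deriv (fun s => g (f s)) (τ t) :=
    Filter.EventuallyEq.deriv_eq hev
  -- derivative of f at τ t
  have hfder : HasDerivAt f (deriv f (τ t)) (τ t) := (hf (τ t)).hasDerivAt
  have hfτd : deriv f (τ t) * (θ * A t ^ (m + 1)) = 1 := by
    have hcomp : HasDerivAt (fun u => f (τ u)) (deriv f (τ t) * (θ * A t ^ (m + 1))) t :=
      hfder.comp t (hτder t)
    have heq : (fun u => f (τ u)) = fun u => u := funext hfτ
    rw [heq] at hcomp
    exact hcomp.unique (hasDerivAt_id t)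
  -- derivative of g ∘ f at τ t
  have hgft : HasDerivAt (fun s => g (f s)) (deriv g t * deriv f (τ t)) (τ t) := by
    have h1 : HasDerivAt g (deriv g t) (f (τ t)) := by
      rw [hfτ t]; exact (hgdiff t).hasDerivAt
    exact h1.comp (τ t) hfder
  -- derivative of g at t
  have hgder : HasDerivAt g
      (((m / θ) * deriv h t * A t - (m / θ) * h t * (A t * h t)) / (A t) ^ 2) t := by
    have hc : HasDerivAt (fun u => (m / θ) * h u) ((m / θ) * deriv h t) t :=
      ((hhdiff t).hasDerivAt.const_mul (m / θ))
    exact hc.div (hAder t) (hApos t).ne'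
  have hgderiv : deriv g t
      = ((m / θ) * deriv h t * A t - (m / θ) * h t * (A t * h t)) / (A t) ^ 2 :=
    hgder.deriv
  -- second derivative value
  have hdd : deriv (deriv Y) (τ t)
      = (((m / θ) * deriv h t * A t - (m / θ) * h t * (A t * h t)) / (A t) ^ 2)
        * deriv f (τ t) := by
    rw [hder2, hgft.deriv, hgderiv]
  -- φt
  have hφtdef : φt = fun s => φ (f s) := funext hφt
  have hφtdiff : Differentiable ℝ φt := by
    rw [hφtdef]; exact fun s => DifferentiableAt.comp s (hφ (f s)) (hf s)
  have hφtd : deriv φt (τ t) * (θ * A t ^ (m + 1)) = deriv φ t := by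
    have hcomp : HasDerivAt (fun u => φt (τ u)) (deriv φt (τ t) * (θ * A t ^ (m + 1))) t :=
      (hφtdiff (τ t)).hasDerivAt.comp t (hτder t)
    have heq : (fun u => φt (τ u)) = φ := by
      funext u; rw [hφt (τ u), hfτ u]
    rw [heq] at hcomp
    exact hcomp.unique (hφ t).hasDerivAt
  -- values at τ t
  have hYval : Y (τ t) = A t ^ m := by
    rw [hYdef]; simp only [hfτ t]
  have hYpow : Y (τ t) ^ ((m + 2) / m) = A t ^ m * A t ^ 2 := by
    rw [hYval, ← Real.rpow_mul (hApos t).le]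
    have he : m * ((m + 2) / m) = m + 2 := by field_simp
    rw [he, Real.rpow_add (hApos t) m 2,
      show ((2 : ℝ) : ℝ) = ((2 : ℕ) : ℝ) by norm_num, Real.rpow_natCast]
  -- algebraic core
  have hd1 : ((d : ℝ) - 1) ≠ 0 := by
    have : (2 : ℝ) ≤ (d : ℝ) := by exact_mod_cast hd
    linarith
  set μ' : Fin d → ℝ := fun l => if l = z then 0 else μ l with hμ'def
  have hμ'H : ∀ l, H l t = H z t + μ' l := by
    intro l
    by_cases hl : l = z
    · subst hl; simp [hμ'def]
    · have hlv : l.val ≠ 0 := fun hv => hl (Fin.ext hv)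
      have harel : a l = fun u => ω l * Real.exp (μ l * u) * a z u := funext (hrel l hlv)
      have hexp : HasDerivAt (fun u => Real.exp (μ l * u)) (Real.exp (μ l * t) * (μ l * 1)) t :=
        HasDerivAt.exp ((hasDerivAt_id t).const_mul (μ l))
      have hprod : HasDerivAt (fun u => ω l * Real.exp (μ l * u) * a z u)
          ((ω l * (Real.exp (μ l * t) * (μ l * 1))) * a z t
            + (ω l * Real.exp (μ l * t)) * deriv (a z) t) t :=
        (hexp.const_mul (ω l)).mul ((ha z t).hasDerivAt)
      have hdal : deriv (a l) t
          = (ω l * (Real.exp (μ l * t) * (μ l * 1))) * a z t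
            + (ω l * Real.exp (μ l * t)) * deriv (a z) t := by
        rw [harel]; exact hprod.deriv
      have hωne := (hω l hlv).ne'
      have hexpne := (Real.exp_pos (μ l * t)).ne'
      have hazne := (hapos z t).ne'
      rw [hH l t, hH z t, hdal, hrel l hlv t]
      simp only [hμ'def, if_neg hl]
      field_simp
      ring
  set Sμ : ℝ := ∑ l, μ' l with hSμdef
  set P' : ℝ := ∑ l, (μ' l)^2 with hP'def
  set M' : ℝ := ∑ pr ∈ Finset.univ.filter (fun pr : Fin d × Fin d => pr.1 < pr.2),
    μ' pr.1 * μ' pr.2 with hM'def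
  have hsum1 : h t = (d : ℝ) * H z t + Sμ := by
    show (∑ l, H l t) = _
    rw [Finset.sum_congr rfl (fun l _ => hμ'H l), Finset.sum_add_distrib, Finset.sum_const,
      Finset.card_univ, Fintype.card_fin, nsmul_eq_mul, hSμdef]
  have hsum2 : (∑ l, (H l t)^2) = (d : ℝ) * (H z t)^2 + 2 * H z t * Sμ + P' := by
    rw [Finset.sum_congr rfl (fun l _ => by rw [hμ'H l] :
        ∀ l ∈ Finset.univ, (H l t)^2 = (H z t + μ' l)^2)]
    rw [Finset.sum_congr rfl (fun l _ => by ring :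
        ∀ l ∈ Finset.univ, (H z t + μ' l)^2 = (H z t)^2 + 2 * H z t * μ' l + (μ' l)^2)]
    rw [Finset.sum_add_distrib, Finset.sum_add_distrib, Finset.sum_const,
      Finset.card_univ, Fintype.card_fin, nsmul_eq_mul, ← Finset.mul_sum, hSμdef, hP'def]
  have hsqH := sq_sum_pairs d (fun l => H l t)
  have hsqμ := sq_sum_pairs d μ'
  have hM : M' = ∑ pr ∈ Finset.univ.filter
      (fun pr : Fin d × Fin d => pr.1.val ≠ 0 ∧ pr.1 < pr.2), μ pr.1 * μ pr.2 := by
    rw [hM'def, Finset.sum_filter, Finset.sum_filter]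
    refine Finset.sum_congr rfl (fun pr _ => ?_)
    by_cases h1 : pr.1 < pr.2
    · by_cases h2 : pr.1 = z
      · simp [h1, h2, hμ'def, Fin.ext_iff, hzdef]
      · have h2v : pr.1.val ≠ 0 := fun hv => h2 (Fin.ext hv)
        have h3 : pr.2 ≠ z := by
          intro hc
          rw [hc] at h1
          have h4 : pr.1.val < (0 : ℕ) := Fin.lt_def.mp h1
          omega
        simp [h1, h2, h2v, h3, hμ'def]
    · simp [h1]
  have hP : P' = ∑ j ∈ Finset.univ.filter (fun j : Fin d => j.val ≠ 0), μ j ^ 2 := by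
    rw [hP'def, Finset.sum_filter]
    refine Finset.sum_congr rfl (fun j _ => ?_)
    by_cases hj : j = z
    · simp [hj, hμ'def, Fin.ext_iff, hzdef]
    · have hjv : j.val ≠ 0 := fun hv => hj (Fin.ext hv)
      simp [hj, hjv, hμ'def]
  -- Einstein equation consequences
  have e0 : (∑ pr ∈ Finset.univ.filter (fun pr : Fin d × Fin d => pr.1 < pr.2),
        H pr.1 t * H pr.2 t)
      = κ * ((deriv φ t) ^ 2 / 2 + (A t) ^ 2 * (V (φ t) + ρ t + Λ / κ)) := hI0 t
  have h1i : ∀ i : Fin d, (∑ l, deriv (H l) t) - deriv (H i) t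
        - (∑ pr ∈ Finset.univ.filter (fun pr : Fin d × Fin d => pr.1 < pr.2),
            H pr.1 t * H pr.2 t)
      = κ * (-(deriv φ t) ^ 2 / 2 + (A t) ^ 2 * (V (φ t) - p t + Λ / κ)) := by
    intro i
    have := hIi i t
    rw [hkey i] at this
    exact this
  have esum : (d : ℝ) * (∑ l, deriv (H l) t) - (∑ l, deriv (H l) t)
        - (d : ℝ) * (∑ pr ∈ Finset.univ.filter (fun pr : Fin d × Fin d => pr.1 < pr.2),
            H pr.1 t * H pr.2 t)
      = (d : ℝ) * (κ * (-(deriv φ t) ^ 2 / 2 + (A t) ^ 2 * (V (φ t) - p t + Λ / κ))) := by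
    have hL : ∑ i : Fin d, ((∑ l, deriv (H l) t) - deriv (H i) t
          - (∑ pr ∈ Finset.univ.filter (fun pr : Fin d × Fin d => pr.1 < pr.2),
              H pr.1 t * H pr.2 t))
        = (d : ℝ) * (κ * (-(deriv φ t) ^ 2 / 2 + (A t) ^ 2 * (V (φ t) - p t + Λ / κ))) := by
      rw [Finset.sum_congr rfl (fun i _ => h1i i), Finset.sum_const,
        Finset.card_univ, Fintype.card_fin, nsmul_eq_mul]
    rw [← hL, Finset.sum_sub_distrib, Finset.sum_sub_distrib, Finset.sum_const,
      Finset.sum_const, Finset.card_univ, Fintype.card_fin, nsmul_eq_mul, nsmul_eq_mul]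
  have hhd := hhder t
  have hsq : ((d : ℝ) - 1) * (h t)^2
      = 2 * (d : ℝ) * (∑ pr ∈ Finset.univ.filter (fun pr : Fin d × Fin d => pr.1 < pr.2),
          H pr.1 t * H pr.2 t) + ((d : ℝ) - 1) * P' - 2 * M' := by
    linear_combination (d : ℝ) * hsqH + (d : ℝ) * hsum2 - hsqμ
      - (h t + (d : ℝ) * H z t + Sμ) * hsum1
  have corep : ((d : ℝ) - 1) * deriv h t - ((d : ℝ) - 1) * (h t)^2
        + (d : ℝ) * κ * (deriv φ t)^2 - 2 * M' + ((d : ℝ) - 1) * P'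
        + (d : ℝ) * κ * (A t)^2 * (ρ t + p t) = 0 := by
    linear_combination esum - hsq - (d : ℝ) * e0 + ((d : ℝ) - 1) * hhd
  -- final assembly
  refine ⟨hYdiff (τ t), hdY2, ?_⟩
  have hden : (θ * (A t ^ m * A t)) ≠ 0 :=
    mul_ne_zero hθ.ne' (mul_ne_zero (hBpos t).ne' (hApos t).ne')
  have hX2 : deriv f (τ t) = 1 / (θ * (A t ^ m * A t)) := by
    rw [eq_div_iff hden, ← hAm1 t]
    exact hfτd
  have hX3 : deriv φt (τ t) = deriv φ t / (θ * (A t ^ m * A t)) := by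
    rw [eq_div_iff hden, ← hAm1 t]
    exact hφtd
  rw [hdd, hQ (τ t), hX2, hX3, hYpow, hYval, hfτ t, ← hM, ← hP]
  have hBne := (hBpos t).ne'
  have hAne := (hApos t).ne'
  have hθne := hθ.ne'
  field_simp
  linear_combination corep
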